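/- Every minor of the infinite Hankel matrix H (with rows indexed by i ≥ 0, columns indexed by pairs (j, m) with 1 ≤ j ≤ n, m ≥ 0, and entry x_j^(i+m)) belongs to the inverse system (I_n^arc)^⊥ of the arc ideal of the double point, over a field of characteristic zero. -/

import Mathlib

open MvPolynomial

noncomputable section

open Classical in
/-- Apply the constant-coefficient differential operator `f(∂)` to `P`. -/
def diffApply {k σ : Type*} [CommSemiring k] (f P : MvPolynomial σ k) :
    MvPolynomial σ k :=
  ∑ d ∈ f.support, ∑ e ∈ P.support,
    if d ≤ e then
      monomial (e - d)
        (f.coeff d * P.coeff e * ∏ i ∈ d.support, ((e i).descFactorial (d i) : k))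
    else 0

/-- The ideal of the arc scheme of the double point in `n` variables:
generated by the coefficients of `t^ℓ` in `x_i(t) * x_j(t)`. -/
def arcIdeal (k : Type*) [CommSemiring k] (n : ℕ) : Ideal (MvPolynomial (Fin n × ℕ) k) :=
  Ideal.span { g | ∃ (i j : Fin n) (l : ℕ),
    g = ∑ s ∈ Finset.range (l + 1), X (i, s) * X (j, l - s) }

/-- The Macaulay inverse system of the arc ideal. -/
def invSys (k : Type*) [CommSemiring k] (n : ℕ) : Set (MvPolynomial (Fin n × ℕ) k) :=
  { P | ∀ f ∈ arcIdeal k n, diffApply f P = 0 }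

namespace Stmt7Aux

variable {k : Type*} {σ : Type*} [CommSemiring k]

open Classical in
/-- one term of the operator application -/
def term (d e : σ →₀ ℕ) (b : k) : MvPolynomial σ k :=
  if d ≤ e then
    monomial (e - d) (b * ∏ i ∈ d.support, ((e i).descFactorial (d i) : k))
  else 0

open Classical in
/-- apply the monomial differential operator `∂^d` to `P` -/
def opApp (d : σ →₀ ℕ) (P : MvPolynomial σ k) : MvPolynomial σ k :=
  ∑ e ∈ P.support, term d e (P.coeff e)

lemma term_zero (d e : σ →₀ ℕ) : term d e (0 : k) = 0 := by
  unfold term; split <;> simp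

lemma term_add (d e : σ →₀ ℕ) (a b : k) :
    term d e (a + b) = term d e a + term d e b := by
  unfold term; split <;> simp [add_mul]

lemma term_smul (d e : σ →₀ ℕ) (a b : k) :
    term d e (a * b) = a • term d e b := by
  unfold term; split <;> simp [smul_monomial, mul_assoc]

lemma opApp_eq_sum (d : σ →₀ ℕ) (P : MvPolynomial σ k) {u : Finset (σ →₀ ℕ)}
    (hu : P.support ⊆ u) :
    opApp d P = ∑ e ∈ u, term d e (P.coeff e) := by
  refine Finset.sum_subset hu fun e _ he => ?_
  rw [MvPolynomial.notMem_support_iff.mp he, term_zero]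

lemma opApp_zero (d : σ →₀ ℕ) : opApp d (0 : MvPolynomial σ k) = 0 := by
  simp [opApp]

lemma opApp_add (d : σ →₀ ℕ) (P Q : MvPolynomial σ k) :
    opApp d (P + Q) = opApp d P + opApp d Q := by
  classical
  rw [opApp_eq_sum d (P + Q) (MvPolynomial.support_add),
    opApp_eq_sum d P (Finset.subset_union_left (s₂ := Q.support)),
    opApp_eq_sum d Q (Finset.subset_union_right (s₁ := P.support)),
    ← Finset.sum_add_distrib]
  exact Finset.sum_congr rfl fun e _ => by rw [MvPolynomial.coeff_add, term_add]

lemma opApp_smul (d : σ →₀ ℕ) (a : k) (P : MvPolynomial σ k) :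
    opApp d (a • P) = a • opApp d P := by
  rw [opApp_eq_sum d (a • P) (MvPolynomial.support_smul), opApp, Finset.smul_sum]
  exact Finset.sum_congr rfl fun e _ => by
    rw [MvPolynomial.coeff_smul, smul_eq_mul, term_smul]

lemma opApp_monomial (d e : σ →₀ ℕ) (b : k) :
    opApp d (monomial e b) = term d e b := by
  classical
  rcases eq_or_ne b 0 with rfl | hb
  · rw [term_zero, map_zero, opApp_zero]
  · rw [opApp_eq_sum d _ (Finset.Subset.refl _), MvPolynomial.support_monomial, if_neg hb,
      Finset.sum_singleton, MvPolynomial.coeff_monomial, if_pos rfl]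

lemma descFactorial_add' (a b c : ℕ) :
    a.descFactorial (b + c) = a.descFactorial c * (a - c).descFactorial b := by
  induction b with
  | zero => simp
  | succ b ih =>
      rw [Nat.succ_add, Nat.descFactorial_succ, ih, Nat.descFactorial_succ,
        show a - (b + c) = a - c - b by omega]
      ring

lemma prod_desc (d₁ d₂ e : σ →₀ ℕ) :
    ∏ i ∈ (d₁ + d₂).support, (e i).descFactorial ((d₁ + d₂) i) =
      (∏ i ∈ d₂.support, (e i).descFactorial (d₂ i)) *
        ∏ i ∈ d₁.support, ((e - d₂) i).descFactorial (d₁ i) := by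
  classical
  have h1 : ∏ i ∈ (d₁ + d₂).support, (e i).descFactorial ((d₁ + d₂) i) =
      ∏ i ∈ d₁.support ∪ d₂.support, (e i).descFactorial ((d₁ + d₂) i) := by
    refine Finset.prod_subset Finsupp.support_add fun i _ hi => ?_
    rw [Finsupp.notMem_support_iff.mp hi, Nat.descFactorial_zero]
  have h2 : ∏ i ∈ d₂.support, (e i).descFactorial (d₂ i) =
      ∏ i ∈ d₁.support ∪ d₂.support, (e i).descFactorial (d₂ i) := by
    refine Finset.prod_subset (Finset.subset_union_right) fun i _ hi => ?_
    rw [Finsupp.notMem_support_iff.mp hi, Nat.descFactorial_zero]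
  have h3 : ∏ i ∈ d₁.support, ((e - d₂) i).descFactorial (d₁ i) =
      ∏ i ∈ d₁.support ∪ d₂.support, ((e - d₂) i).descFactorial (d₁ i) := by
    refine Finset.prod_subset (Finset.subset_union_left) fun i _ hi => ?_
    rw [Finsupp.notMem_support_iff.mp hi, Nat.descFactorial_zero]
  rw [h1, h2, h3, ← Finset.prod_mul_distrib]
  refine Finset.prod_congr rfl fun i _ => ?_
  rw [Finsupp.add_apply, Finsupp.tsub_apply, descFactorial_add']

lemma opApp_opApp (d₁ d₂ : σ →₀ ℕ) (P : MvPolynomial σ k) :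
    opApp d₁ (opApp d₂ P) = opApp (d₁ + d₂) P := by
  induction P using MvPolynomial.induction_on' with
  | add p q hp hq => rw [opApp_add, opApp_add, opApp_add, hp, hq]
  | monomial e b =>
      rw [opApp_monomial, opApp_monomial]
      unfold term
      by_cases h2 : d₂ ≤ e
      · rw [if_pos h2, opApp_monomial]
        unfold term
        by_cases h1 : d₁ ≤ e - d₂
        · have h12 : d₁ + d₂ ≤ e := by
            rw [Finsupp.le_def]
            intro i
            have i1 := Finsupp.le_def.mp h1 i
            have i2 := Finsupp.le_def.mp h2 i
            rw [Finsupp.tsub_apply] at i1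
            rw [Finsupp.add_apply]
            omega
          rw [if_pos h1, if_pos h12]
          have hsub : e - d₂ - d₁ = e - (d₁ + d₂) := by
            rw [tsub_tsub, add_comm]
          rw [hsub]
          congr 1
          rw [mul_assoc]
          congr 1
          rw [← Nat.cast_prod, ← Nat.cast_prod, ← Nat.cast_prod, ← Nat.cast_mul]
          exact (congrArg Nat.cast (prod_desc d₁ d₂ e)).symm
        · have h12 : ¬ d₁ + d₂ ≤ e := by
            intro hle
            apply h1
            rw [Finsupp.le_def]
            intro i
            have := Finsupp.le_def.mp hle i
            rw [Finsupp.add_apply] at this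
            rw [Finsupp.tsub_apply]
            omega
          rw [if_neg h1, if_neg h12]
      · have h12 : ¬ d₁ + d₂ ≤ e := by
          intro hle
          apply h2
          rw [Finsupp.le_def]
          intro i
          have := Finsupp.le_def.mp hle i
          rw [Finsupp.add_apply] at this
          omega
        rw [if_neg h2, if_neg h12, opApp_zero]

lemma sum_support_subset (P : MvPolynomial σ k) {u : Finset (σ →₀ ℕ)} (hu : P.support ⊆ u)
    {M : Type*} [AddCommMonoid M] (G : (σ →₀ ℕ) → k → M) (hG : ∀ d, G d 0 = 0) :
    ∑ d ∈ P.support, G d (P.coeff d) = ∑ d ∈ u, G d (P.coeff d) :=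
  Finset.sum_subset hu fun d _ hd => by
    rw [MvPolynomial.notMem_support_iff.mp hd, hG]

lemma diffApply_eq (f P : MvPolynomial σ k) :
    diffApply f P = ∑ d ∈ f.support, f.coeff d • opApp d P := by
  unfold diffApply opApp term
  refine Finset.sum_congr rfl fun d _ => ?_
  rw [Finset.smul_sum]
  refine Finset.sum_congr rfl fun e _ => ?_
  split_ifs with h
  · rw [smul_monomial, smul_eq_mul, mul_assoc]
  · simp

lemma diffApply_zero_left (P : MvPolynomial σ k) : diffApply 0 P = 0 := by
  simp [diffApply]

lemma diffApply_zero_right (f : MvPolynomial σ k) : diffApply f 0 = 0 := by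
  simp [diffApply]

lemma diffApply_add_left (f g P : MvPolynomial σ k) :
    diffApply (f + g) P = diffApply f P + diffApply g P := by
  classical
  rw [diffApply_eq, diffApply_eq, diffApply_eq,
    sum_support_subset (f + g) (MvPolynomial.support_add)
      (fun d a => a • opApp d P) (fun d => by simp),
    sum_support_subset f (Finset.subset_union_left (s₂ := g.support))
      (fun d a => a • opApp d P) (fun d => by simp),
    sum_support_subset g (Finset.subset_union_right (s₁ := f.support))
      (fun d a => a • opApp d P) (fun d => by simp),
    ← Finset.sum_add_distrib]
  exact Finset.sum_congr rfl fun d _ => by rw [MvPolynomial.coeff_add, add_smul]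

lemma diffApply_monomial_left (d : σ →₀ ℕ) (a : k) (P : MvPolynomial σ k) :
    diffApply (monomial d a) P = a • opApp d P := by
  classical
  rw [diffApply_eq]
  rcases eq_or_ne a 0 with rfl | ha
  · simp
  · rw [MvPolynomial.support_monomial, if_neg ha, Finset.sum_singleton,
      MvPolynomial.coeff_monomial, if_pos rfl]

lemma diffApply_mul (f g P : MvPolynomial σ k) :
    diffApply (f * g) P = diffApply f (diffApply g P) := by
  induction f using MvPolynomial.induction_on' with
  | add p q hp hq => rw [add_mul, diffApply_add_left, hp, hq, diffApply_add_left]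
  | monomial d a =>
      rw [diffApply_monomial_left]
      induction g using MvPolynomial.induction_on' with
      | add p q hp hq =>
          rw [mul_add, diffApply_add_left, hp, hq, diffApply_add_left, opApp_add, smul_add]
      | monomial e b =>
          rw [MvPolynomial.monomial_mul, diffApply_monomial_left, diffApply_monomial_left,
            opApp_smul, opApp_opApp, smul_smul]

lemma opApp_single (b : σ) (P : MvPolynomial σ k) :
    opApp (Finsupp.single b 1) P = pderiv b P := by
  induction P using MvPolynomial.induction_on' with
  | add p q hp hq => rw [opApp_add, hp, hq, map_add]
  | monomial e a =>
      rw [opApp_monomial, pderiv_monomial]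
      unfold term
      rw [Finsupp.support_single_ne_zero _ one_ne_zero, Finset.prod_singleton,
        Finsupp.single_eq_same, Nat.descFactorial_one]
      split_ifs with h
      · rfl
      · have he : e b = 0 := by
          have := Finsupp.single_le_iff.not.mp h
          omega
        rw [he]
        simp

lemma diffApply_X_mul_X (a b : σ) (P : MvPolynomial σ k) :
    diffApply (X a * X b) P = pderiv a (pderiv b P) := by
  have hX : ∀ v : σ, (X v : MvPolynomial σ k) = monomial (Finsupp.single v 1) 1 := fun v => rfl
  rw [hX, hX, MvPolynomial.monomial_mul, one_mul, diffApply_monomial_left, one_smul,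
    ← opApp_opApp, opApp_single, opApp_single]


section Det

lemma pderiv_finset_prod {α : Type*} [DecidableEq α] (v : σ) (s : Finset α) (f : α → MvPolynomial σ k) :
    pderiv v (∏ i ∈ s, f i) = ∑ i ∈ s, pderiv v (f i) * ∏ j ∈ s.erase i, f j := by
  induction s using Finset.induction_on with
  | empty => simp [pderiv_one]
  | @insert a s ha ih =>
      rw [Finset.prod_insert ha, pderiv_mul, ih, Finset.sum_insert ha,
        Finset.erase_insert ha, Finset.mul_sum]
      congr 1
      refine Finset.sum_congr rfl fun i hi => ?_
      rw [Finset.erase_insert_of_ne (by rintro rfl; exact ha hi),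
        Finset.prod_insert (fun hmem => ha (Finset.mem_of_mem_erase hmem))]
      ring

lemma pderiv_det {K : Type*} [CommRing K] {τ : Type*} {m : ℕ} (v : τ)
    (M : Matrix (Fin m) (Fin m) (MvPolynomial τ K)) :
    pderiv v M.det = ∑ t, (M.updateCol t fun s => pderiv v (M s t)).det := by
  have step : ∀ σp : Equiv.Perm (Fin m),
      (pderiv v) (((Equiv.Perm.sign σp : ℤ) : MvPolynomial τ K) * ∏ i, M (σp i) i)
        = ∑ t, ((Equiv.Perm.sign σp : ℤ) : MvPolynomial τ K) *
            (pderiv v (M (σp t) t) * ∏ i ∈ Finset.univ.erase t, M (σp i) i) := by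
    intro σp
    rw [← zsmul_eq_mul, map_zsmul, pderiv_finset_prod, Finset.smul_sum]
    exact Finset.sum_congr rfl fun t _ => zsmul_eq_mul _ _
  rw [Matrix.det_apply', map_sum]
  calc ∑ σp : Equiv.Perm (Fin m),
        (pderiv v) (((Equiv.Perm.sign σp : ℤ) : MvPolynomial τ K) * ∏ i, M (σp i) i)
      = ∑ σp : Equiv.Perm (Fin m), ∑ t, ((Equiv.Perm.sign σp : ℤ) : MvPolynomial τ K) *
            (pderiv v (M (σp t) t) * ∏ i ∈ Finset.univ.erase t, M (σp i) i) :=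
        Finset.sum_congr rfl fun σp _ => step σp
    _ = ∑ t, ∑ σp : Equiv.Perm (Fin m), ((Equiv.Perm.sign σp : ℤ) : MvPolynomial τ K) *
            (pderiv v (M (σp t) t) * ∏ i ∈ Finset.univ.erase t, M (σp i) i) :=
        Finset.sum_comm
    _ = ∑ t, (M.updateCol t fun s => pderiv v (M s t)).det := by
        refine Finset.sum_congr rfl fun t _ => ?_
        rw [Matrix.det_apply']
        refine Finset.sum_congr rfl fun σp _ => ?_
        have hprod : (∏ i, M.updateCol t (fun s => pderiv v (M s t)) (σp i) i)
            = pderiv v (M (σp t) t) * ∏ i ∈ Finset.univ.erase t, M (σp i) i := by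
          rw [← Finset.mul_prod_erase Finset.univ
            (fun i => M.updateCol t (fun s => pderiv v (M s t)) (σp i) i)
            (Finset.mem_univ t)]
          rw [Matrix.updateCol_self]
          congr 1
          exact Finset.prod_congr rfl fun i hi =>
            Matrix.updateCol_ne (Finset.ne_of_mem_erase hi)
        rw [hprod]

lemma det_updateColumn_zero {R : Type*} [CommRing R] {m : ℕ}
    (N : Matrix (Fin m) (Fin m) R) (t : Fin m) :
    (N.updateCol t 0).det = 0 :=
  Matrix.det_eq_zero_of_column_eq_zero t fun s => by rw [Matrix.updateCol_self]; rfl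

lemma det_updateColumn_finset_sum {R : Type*} [CommRing R] {m : ℕ} {α : Type*} [DecidableEq α]
    (N : Matrix (Fin m) (Fin m) R) (t : Fin m) (s : Finset α) (u : α → Fin m → R) :
    (N.updateCol t (∑ i ∈ s, u i)).det = ∑ i ∈ s, (N.updateCol t (u i)).det := by
  induction s using Finset.induction_on with
  | empty => simpa using det_updateColumn_zero N t
  | @insert a s ha ih =>
      rw [Finset.sum_insert ha, Finset.sum_insert ha, Matrix.det_updateCol_add, ih]

lemma det_updateColumn_ite {R : Type*} [CommRing R] {m : ℕ}
    (N : Matrix (Fin m) (Fin m) R) (t : Fin m) (Q : Fin m → Prop) [DecidablePred Q] :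
    (N.updateCol t (fun s => if Q s then (1 : R) else 0)).det
      = ∑ σ0, if Q σ0 then (N.updateCol t (Pi.single σ0 1)).det else 0 := by
  have hv : (fun s => if Q s then (1 : R) else 0)
      = ∑ σ0 : Fin m, if Q σ0 then Pi.single σ0 (1 : R) else 0 := by
    funext s
    rw [Finset.sum_apply]
    rw [Finset.sum_eq_single s (fun b _ hb => ?_) (fun hs => absurd (Finset.mem_univ s) hs)]
    · split_ifs with h
      · rw [Pi.single_eq_same]
      · rfl
    · split_ifs with h
      · exact Pi.single_eq_of_ne (fun he => hb he.symm) 1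
      · rfl
  rw [hv, det_updateColumn_finset_sum]
  refine Finset.sum_congr rfl fun σ0 _ => ?_
  split_ifs with h
  · rfl
  · exact det_updateColumn_zero N t

lemma updateColumn_comm {R : Type*} {m : ℕ} (N : Matrix (Fin m) (Fin m) R)
    {t t' : Fin m} (h : t ≠ t') (u v : Fin m → R) :
    (N.updateCol t u).updateCol t' v = (N.updateCol t' v).updateCol t u := by
  ext s w
  by_cases h1 : w = t' <;> by_cases h2 : w = t
  · exact absurd (h2.symm.trans h1) h
  all_goals simp [Matrix.updateCol_apply, h1, h2, h.symm, h]

end Det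

lemma diffApply_sum_left {α : Type*} (s : Finset α) (g : α → MvPolynomial σ k)
    (P : MvPolynomial σ k) :
    diffApply (∑ i ∈ s, g i) P = ∑ i ∈ s, diffApply (g i) P := by
  classical
  induction s using Finset.induction_on with
  | empty => simpa using diffApply_zero_left P
  | @insert a s ha ih =>
      rw [Finset.sum_insert ha, diffApply_add_left, ih, Finset.sum_insert ha]

end Stmt7Aux

open Stmt7Aux in
/-- every minor of the infinite Hankel matrix (entry `x_j^(i+m)` in row `i`,
column `(j, m)`) belongs to the inverse system of the arc ideal of the double point. -/
theorem stmt7 {k : Type*} [Field k] [CharZero k] (n l : ℕ)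
    (r : Fin l → ℕ) (c : Fin l → Fin n × ℕ)
    (hr : Function.Injective r) (hc : Function.Injective c) :
    (Matrix.of fun s t : Fin l =>
        (X ((c t).1, r s + (c t).2) : MvPolynomial (Fin n × ℕ) k)).det ∈ invSys k n := by
  classical
  set M0 : Matrix (Fin l) (Fin l) (MvPolynomial (Fin n × ℕ) k) :=
    Matrix.of fun s t : Fin l => (X ((c t).1, r s + (c t).2) : MvPolynomial (Fin n × ℕ) k)
    with hM0
  show ∀ f ∈ arcIdeal k n, diffApply f M0.det = 0
  intro f hf
  have main : ∀ (i j : Fin n) (L : ℕ),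
      diffApply (∑ s ∈ Finset.range (L + 1),
        (X (i, s) * X (j, L - s) : MvPolynomial (Fin n × ℕ) k)) M0.det = 0 := by
    intro i j L
    -- the matrices with basis-vector columns
    set D : Fin l → Fin l → Fin l → Fin l → MvPolynomial (Fin n × ℕ) k :=
      fun t t' σ0 σ1 =>
        ((M0.updateCol t (Pi.single σ0 1)).updateCol t' (Pi.single σ1 1)).det with hD
    -- first derivative of the determinant
    have h1 : ∀ b : ℕ, pderiv ((j, b) : Fin n × ℕ) M0.det
        = ∑ t' : Fin l, (M0.updateCol t'
            (fun s => if (c t').1 = j ∧ r s + (c t').2 = b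
              then (1 : MvPolynomial (Fin n × ℕ) k) else 0)).det := by
      intro b
      rw [pderiv_det]
      refine Finset.sum_congr rfl fun t' _ => ?_
      refine congrArg Matrix.det (congrArg (M0.updateCol t') (funext fun s => ?_))
      show pderiv ((j, b) : Fin n × ℕ) (X ((c t').1, r s + (c t').2)) = _
      rw [pderiv_X]
      simp [Pi.single_apply, Prod.ext_iff, eq_comm, and_comm]
    -- second derivative of the determinant
    have h2 : ∀ a b : ℕ, pderiv ((i, a) : Fin n × ℕ) (pderiv ((j, b) : Fin n × ℕ) M0.det)
        = ∑ t' : Fin l, ∑ t : Fin l,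
            if t = t' then 0 else
              ((M0.updateCol t' (fun s => if (c t').1 = j ∧ r s + (c t').2 = b
                  then (1 : MvPolynomial (Fin n × ℕ) k) else 0)).updateCol t
                (fun s => if (c t).1 = i ∧ r s + (c t).2 = a then 1 else 0)).det := by
      intro a b
      rw [h1 b, map_sum]
      refine Finset.sum_congr rfl fun t' _ => ?_
      rw [pderiv_det]
      refine Finset.sum_congr rfl fun t _ => ?_
      by_cases ht : t = t'
      · rw [if_pos ht]
        subst ht
        refine Matrix.det_eq_zero_of_column_eq_zero t fun s => ?_
        rw [Matrix.updateCol_self]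
        show pderiv ((i, a) : Fin n × ℕ)
          ((M0.updateCol t (fun s' => if (c t).1 = j ∧ r s' + (c t).2 = b
            then (1 : MvPolynomial (Fin n × ℕ) k) else 0)) s t) = 0
        rw [Matrix.updateCol_self]
        split_ifs with hq
        · exact pderiv_one
        · exact map_zero _
      · rw [if_neg ht]
        refine congrArg Matrix.det (congrArg _ (funext fun s => ?_))
        show pderiv ((i, a) : Fin n × ℕ)
          ((M0.updateCol t' (fun s' => if (c t').1 = j ∧ r s' + (c t').2 = b
            then (1 : MvPolynomial (Fin n × ℕ) k) else 0)) s t) = _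
        rw [Matrix.updateCol_ne ht]
        show pderiv ((i, a) : Fin n × ℕ) (X ((c t).1, r s + (c t).2)) = _
        rw [pderiv_X]
        simp [Pi.single_apply, Prod.ext_iff, eq_comm, and_comm]
    -- expansion into basis-vector columns
    have h3 : ∀ (a b : ℕ) (t t' : Fin l), t ≠ t' →
        ((M0.updateCol t' (fun s => if (c t').1 = j ∧ r s + (c t').2 = b
            then (1 : MvPolynomial (Fin n × ℕ) k) else 0)).updateCol t
          (fun s => if (c t).1 = i ∧ r s + (c t).2 = a then 1 else 0)).det
        = ∑ σ0 : Fin l, ∑ σ1 : Fin l,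
            if (c t).1 = i ∧ r σ0 + (c t).2 = a then
              (if (c t').1 = j ∧ r σ1 + (c t').2 = b then D t t' σ0 σ1 else 0)
            else 0 := by
      intro a b t t' ht
      rw [det_updateColumn_ite]
      refine Finset.sum_congr rfl fun σ0 _ => ?_
      split_ifs with h
      · rw [updateColumn_comm M0 (Ne.symm ht), det_updateColumn_ite]
      · simp
    -- now compute
    have e0 : diffApply (∑ s ∈ Finset.range (L + 1),
          (X (i, s) * X (j, L - s) : MvPolynomial (Fin n × ℕ) k)) M0.det
        = ∑ s ∈ Finset.range (L + 1),
            pderiv ((i, s) : Fin n × ℕ) (pderiv ((j, L - s) : Fin n × ℕ) M0.det) := by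
      rw [diffApply_sum_left]
      exact Finset.sum_congr rfl fun s _ => diffApply_X_mul_X _ _ _
    rw [e0]
    have e1 : (∑ s ∈ Finset.range (L + 1),
          pderiv ((i, s) : Fin n × ℕ) (pderiv ((j, L - s) : Fin n × ℕ) M0.det))
        = ∑ s ∈ Finset.range (L + 1), ∑ t' : Fin l, ∑ t : Fin l,
            if t = t' then 0 else
              ((M0.updateCol t' (fun s' => if (c t').1 = j ∧ r s' + (c t').2 = L - s
                  then (1 : MvPolynomial (Fin n × ℕ) k) else 0)).updateCol t
                (fun s' => if (c t).1 = i ∧ r s' + (c t).2 = s then 1 else 0)).det :=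
      Finset.sum_congr rfl fun s _ => h2 s (L - s)
    rw [e1, Finset.sum_comm]
    refine Finset.sum_eq_zero fun t' _ => ?_
    rw [Finset.sum_comm]
    refine Finset.sum_eq_zero fun t _ => ?_
    by_cases ht : t = t'
    · simp [ht]
    · have e2 : (∑ s ∈ Finset.range (L + 1),
            if t = t' then 0 else
              ((M0.updateCol t' (fun s' => if (c t').1 = j ∧ r s' + (c t').2 = L - s
                  then (1 : MvPolynomial (Fin n × ℕ) k) else 0)).updateCol t
                (fun s' => if (c t).1 = i ∧ r s' + (c t).2 = s then 1 else 0)).det)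
          = ∑ s ∈ Finset.range (L + 1), ∑ σ0 : Fin l, ∑ σ1 : Fin l,
              if (c t).1 = i ∧ r σ0 + (c t).2 = s then
                (if (c t').1 = j ∧ r σ1 + (c t').2 = L - s then D t t' σ0 σ1 else 0)
              else 0 :=
        Finset.sum_congr rfl fun s _ => by rw [if_neg ht, h3 s (L - s) t t' ht]
      rw [e2, Finset.sum_comm]
      have e3 : ∀ σ0 : Fin l, (∑ s ∈ Finset.range (L + 1), ∑ σ1 : Fin l,
            if (c t).1 = i ∧ r σ0 + (c t).2 = s then
              (if (c t').1 = j ∧ r σ1 + (c t').2 = L - s then D t t' σ0 σ1 else 0)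
            else 0)
          = ∑ σ1 : Fin l, ∑ s ∈ Finset.range (L + 1),
            if (c t).1 = i ∧ r σ0 + (c t).2 = s then
              (if (c t').1 = j ∧ r σ1 + (c t').2 = L - s then D t t' σ0 σ1 else 0)
            else 0 := fun σ0 => Finset.sum_comm
      rw [Finset.sum_congr rfl fun σ0 _ => e3 σ0]
      -- collapse the sum over s
      have hcol : ∀ σ0 σ1 : Fin l,
          (∑ s ∈ Finset.range (L + 1),
            if (c t).1 = i ∧ r σ0 + (c t).2 = s then
              (if (c t').1 = j ∧ r σ1 + (c t').2 = L - s then D t t' σ0 σ1 else 0)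
            else 0)
          = if (c t).1 = i ∧ (c t').1 = j ∧ r σ0 + (c t).2 + (r σ1 + (c t').2) = L
              then D t t' σ0 σ1 else 0 := by
        intro σ0 σ1
        by_cases hC : (c t).1 = i ∧ (c t').1 = j ∧ r σ0 + (c t).2 + (r σ1 + (c t').2) = L
        · obtain ⟨hC1, hC2, hC3⟩ := hC
          rw [if_pos ⟨hC1, hC2, hC3⟩,
            Finset.sum_eq_single_of_mem (r σ0 + (c t).2)
              (Finset.mem_range.mpr (by omega))
              (fun s _ hne => by
                rw [if_neg]
                rintro ⟨-, hh⟩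
                exact hne hh.symm)]
          rw [if_pos ⟨hC1, rfl⟩, if_pos ⟨hC2, by omega⟩]
        · rw [if_neg hC]
          refine Finset.sum_eq_zero fun s hs => ?_
          rcases Classical.em ((c t).1 = i ∧ r σ0 + (c t).2 = s) with ⟨hA1, hA2⟩ | hA
          · rw [if_pos ⟨hA1, hA2⟩, if_neg]
            rintro ⟨hB1, hB2⟩
            refine hC ⟨hA1, hB1, ?_⟩
            have := Finset.mem_range.mp hs
            omega
          · rw [if_neg hA]
      rw [Finset.sum_congr rfl fun σ0 _ => Finset.sum_congr rfl fun σ1 _ => hcol σ0 σ1]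
      -- antisymmetry of D
      have hanti : ∀ σ0 σ1 : Fin l, D t t' σ1 σ0 = - D t t' σ0 σ1 := by
        intro σ0 σ1
        have hsw : (M0.updateCol t (Pi.single σ1 1)).updateCol t' (Pi.single σ0 1)
            = ((M0.updateCol t (Pi.single σ0 1)).updateCol t'
                (Pi.single σ1 1)).submatrix id (Equiv.swap t t') := by
          ext s w
          rw [Matrix.submatrix_apply, id_eq]
          by_cases h1 : w = t'
          · subst h1
            rw [Equiv.swap_apply_right, Matrix.updateCol_self,
              Matrix.updateCol_ne ht, Matrix.updateCol_self]
          · by_cases h2 : w = t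
            · subst h2
              rw [Equiv.swap_apply_left, Matrix.updateCol_ne h1,
                Matrix.updateCol_self, Matrix.updateCol_self]
            · rw [Equiv.swap_apply_of_ne_of_ne h2 h1, Matrix.updateCol_ne h1,
                Matrix.updateCol_ne h2, Matrix.updateCol_ne h1,
                Matrix.updateCol_ne h2]
        show ((M0.updateCol t (Pi.single σ1 1)).updateCol t' (Pi.single σ0 1)).det
          = - ((M0.updateCol t (Pi.single σ0 1)).updateCol t' (Pi.single σ1 1)).det
        rw [hsw, Matrix.det_permute', Equiv.Perm.sign_swap ht]
        simp
      have key : ∀ σ0 σ1 : Fin l,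
          (if (c t).1 = i ∧ (c t').1 = j ∧ r σ1 + (c t).2 + (r σ0 + (c t').2) = L
            then D t t' σ1 σ0 else 0)
          = - (if (c t).1 = i ∧ (c t').1 = j ∧ r σ0 + (c t).2 + (r σ1 + (c t').2) = L
            then D t t' σ0 σ1 else 0) := by
        intro σ0 σ1
        by_cases hC : (c t).1 = i ∧ (c t').1 = j ∧ r σ0 + (c t).2 + (r σ1 + (c t').2) = L
        · obtain ⟨a1, a2, a3⟩ := hC
          rw [if_pos ⟨a1, a2, by omega⟩, if_pos ⟨a1, a2, a3⟩, hanti]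
        · rw [if_neg hC, if_neg (fun hh => hC ⟨hh.1, hh.2.1, by omega⟩), neg_zero]
      set T : MvPolynomial (Fin n × ℕ) k := ∑ σ0 : Fin l, ∑ σ1 : Fin l,
          if (c t).1 = i ∧ (c t').1 = j ∧ r σ0 + (c t).2 + (r σ1 + (c t').2) = L
            then D t t' σ0 σ1 else 0 with hT
      show T = 0
      have hTT : T = - T := by
        conv_lhs => rw [hT, Finset.sum_comm]
        rw [Finset.sum_congr rfl fun x _ => Finset.sum_congr rfl fun y _ => key x y]
        rw [hT]
        simp [Finset.sum_neg_distrib]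
      have hadd : T + T = 0 := add_eq_zero_iff_eq_neg.mpr hTT
      have h2T : (2 : k) • T = 0 := by rw [two_smul]; exact hadd
      rcases smul_eq_zero.mp h2T with h | h
      · exact absurd h (by norm_num)
      · exact h
  have hf' : f ∈ Submodule.span (MvPolynomial (Fin n × ℕ) k)
      { g : MvPolynomial (Fin n × ℕ) k | ∃ (i j : Fin n) (L : ℕ),
        g = ∑ s ∈ Finset.range (L + 1), X (i, s) * X (j, L - s) } := hf
  refine Submodule.span_induction (p := fun g _ => diffApply g M0.det = 0)
    ?_ (diffApply_zero_left _) ?_ ?_ hf'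
  · rintro g ⟨i, j, L, rfl⟩
    exact main i j L
  · intro x y _ _ hx hy
    rw [diffApply_add_left, hx, hy, add_zero]
  · intro a x _ hx
    rw [smul_eq_mul, diffApply_mul, hx, diffApply_zero_right]
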